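/- Let G and H be finite simple graphs such that H has at least one vertex, and let h be a surjective p-morphism from Pos(G) onto Pos(H). If h(∞_a) = ∞_a then h(V_a^G) ⊆ V_a^H and h(V_b^G) ⊆ V_b^H; if h(∞_a) = ∞_b then h(V_a^G) ⊆ V_b^H and h(V_b^G) ⊆ V_a^H. -/
import Mathlib


/-- The carrier of the poset `Pos(G)`: vertices, two copies of the vertices,
two copies of the edges, and four auxiliary elements. -/
inductive PosElem (V E : Type) : Type where
  | ver (v : V)
  | verA (v : V)
  | verB (v : V)
  | edge1 (e : E)
  | edge2 (e : E)
  | top1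
  | top2
  | infA
  | infB

/-- The covering relation of the poset `Pos(G)`, for a graph `G` together with a
choice `ε` of an ordered pair of endpoints for each edge. -/
inductive PosCov {V : Type} (G : SimpleGraph V) (ε : ↥G.edgeSet → V × V) :
    PosElem V ↥G.edgeSet → PosElem V ↥G.edgeSet → Prop where
  | ver_verA (v : V) : PosCov G ε (.ver v) (.verA v)
  | ver_verB (v : V) : PosCov G ε (.ver v) (.verB v)
  | verA_infA (v : V) : PosCov G ε (.verA v) .infA
  | verB_infB (v : V) : PosCov G ε (.verB v) .infB
  | edge1_top1 (e : ↥G.edgeSet) : PosCov G ε (.edge1 e) .top1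
  | edge1_top2 (e : ↥G.edgeSet) : PosCov G ε (.edge1 e) .top2
  | edge2_top1 (e : ↥G.edgeSet) : PosCov G ε (.edge2 e) .top1
  | edge2_top2 (e : ↥G.edgeSet) : PosCov G ε (.edge2 e) .top2
  | isolA_top1 (v : V) (hv : ∀ w, ¬ G.Adj v w) : PosCov G ε (.verA v) .top1
  | isolA_top2 (v : V) (hv : ∀ w, ¬ G.Adj v w) : PosCov G ε (.verA v) .top2
  | isolB_top1 (v : V) (hv : ∀ w, ¬ G.Adj v w) : PosCov G ε (.verB v) .top1
  | isolB_top2 (v : V) (hv : ∀ w, ¬ G.Adj v w) : PosCov G ε (.verB v) .top2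
  | ua_edge1 (e : ↥G.edgeSet) : PosCov G ε (.verA (ε e).1) (.edge1 e)
  | vb_edge1 (e : ↥G.edgeSet) : PosCov G ε (.verB (ε e).2) (.edge1 e)
  | ub_edge2 (e : ↥G.edgeSet) : PosCov G ε (.verB (ε e).1) (.edge2 e)
  | va_edge2 (e : ↥G.edgeSet) : PosCov G ε (.verA (ε e).2) (.edge2 e)

/-- The order of `Pos(G)`: the reflexive-transitive closure of the covering relation. -/
def PosLe {V : Type} (G : SimpleGraph V) (ε : ↥G.edgeSet → V × V)
    (x y : PosElem V ↥G.edgeSet) : Prop :=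
  Relation.ReflTransGen (PosCov G ε) x y

/-- `ε` assigns to every edge an ordered pair of its two endpoints. -/
def OrientOK {V : Type} (G : SimpleGraph V) (ε : ↥G.edgeSet → V × V) : Prop :=
  ∀ e : ↥G.edgeSet, (e : Sym2 V) = s((ε e).1, (ε e).2)

/-- A p-morphism with respect to given order relations: the homomorphism property (HP)
and the backward property (BP). -/
def IsPMorphismRel {α β : Type} (leP : α → α → Prop) (leQ : β → β → Prop)
    (h : α → β) : Prop :=
  (∀ x y, leP x y → leQ (h x) (h y)) ∧
  (∀ (x : α) (y : β), leQ (h x) y → ∃ z : α, leP x z ∧ h z = y)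

open Relation

section Helpers

variable {V : Type} {G : SimpleGraph V} {ε : ↥G.edgeSet → V × V}

lemma max_infA {y} (h : PosLe G ε .infA y) : y = .infA := by
  rcases Relation.ReflTransGen.cases_head h with rfl | ⟨c, hc, -⟩
  · rfl
  · cases hc

lemma max_infB {y} (h : PosLe G ε .infB y) : y = .infB := by
  rcases Relation.ReflTransGen.cases_head h with rfl | ⟨c, hc, -⟩
  · rfl
  · cases hc

lemma max_top1 {y} (h : PosLe G ε .top1 y) : y = .top1 := by
  rcases Relation.ReflTransGen.cases_head h with rfl | ⟨c, hc, -⟩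
  · rfl
  · cases hc

lemma max_top2 {y} (h : PosLe G ε .top2 y) : y = .top2 := by
  rcases Relation.ReflTransGen.cases_head h with rfl | ⟨c, hc, -⟩
  · rfl
  · cases hc

lemma down_infA {x} (h : PosLe G ε x .infA) :
    (∃ v, x = PosElem.ver v) ∨ (∃ v, x = PosElem.verA v) ∨ x = PosElem.infA := by
  induction h using Relation.ReflTransGen.head_induction_on with
  | refl => tauto
  | head hcov _ ih => cases hcov <;> simp_all

lemma down_infB {x} (h : PosLe G ε x .infB) :
    (∃ v, x = PosElem.ver v) ∨ (∃ v, x = PosElem.verB v) ∨ x = PosElem.infB := by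
  induction h using Relation.ReflTransGen.head_induction_on with
  | refl => tauto
  | head hcov _ ih => cases hcov <;> simp_all

lemma up_verA {v z} (h : PosLe G ε (.verA v) z) :
    z = PosElem.verA v ∨ (∃ e, z = PosElem.edge1 e) ∨ (∃ e, z = PosElem.edge2 e) ∨
      z = PosElem.infA ∨ z = PosElem.top1 ∨ z = PosElem.top2 := by
  induction h with
  | refl => tauto
  | tail _ hcov ih =>
    rcases ih with rfl | ⟨e, rfl⟩ | ⟨e, rfl⟩ | rfl | rfl | rfl <;> cases hcov <;> simp

lemma up_verB {v z} (h : PosLe G ε (.verB v) z) :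
    z = PosElem.verB v ∨ (∃ e, z = PosElem.edge1 e) ∨ (∃ e, z = PosElem.edge2 e) ∨
      z = PosElem.infB ∨ z = PosElem.top1 ∨ z = PosElem.top2 := by
  induction h with
  | refl => tauto
  | tail _ hcov ih =>
    rcases ih with rfl | ⟨e, rfl⟩ | ⟨e, rfl⟩ | rfl | rfl | rfl <;> cases hcov <;> simp

lemma up_edge {x z} (hx : (∃ e, x = PosElem.edge1 e) ∨ (∃ e, x = PosElem.edge2 e))
    (h : PosLe G ε x z) :
    (∃ e, z = PosElem.edge1 e) ∨ (∃ e, z = PosElem.edge2 e) ∨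
      z = PosElem.top1 ∨ z = PosElem.top2 := by
  induction h with
  | refl => tauto
  | tail _ hcov ih =>
    rcases ih with ⟨e, rfl⟩ | ⟨e, rfl⟩ | rfl | rfl <;> cases hcov <;> simp

lemma exists_above_max (x : PosElem V ↥G.edgeSet) :
    PosLe G ε x .infA ∨ PosLe G ε x .infB ∨ PosLe G ε x .top1 ∨ PosLe G ε x .top2 := by
  cases x with
  | ver v => exact Or.inl ((ReflTransGen.single (PosCov.ver_verA v)).tail (PosCov.verA_infA v))
  | verA v => exact Or.inl (ReflTransGen.single (PosCov.verA_infA v))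
  | verB v => exact Or.inr (Or.inl (ReflTransGen.single (PosCov.verB_infB v)))
  | edge1 e => exact Or.inr (Or.inr (Or.inl (ReflTransGen.single (PosCov.edge1_top1 e))))
  | edge2 e => exact Or.inr (Or.inr (Or.inl (ReflTransGen.single (PosCov.edge2_top1 e))))
  | infA => exact Or.inl ReflTransGen.refl
  | infB => exact Or.inr (Or.inl ReflTransGen.refl)
  | top1 => exact Or.inr (Or.inr (Or.inl ReflTransGen.refl))
  | top2 => exact Or.inr (Or.inr (Or.inr ReflTransGen.refl))

lemma copies_le_tops (hε : OrientOK G ε) (v : V) :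
    PosLe G ε (.verA v) .top1 ∧ PosLe G ε (.verA v) .top2 ∧
      PosLe G ε (.verB v) .top1 ∧ PosLe G ε (.verB v) .top2 := by
  by_cases hv : ∀ w, ¬ G.Adj v w
  · exact ⟨ReflTransGen.single (PosCov.isolA_top1 v hv),
      ReflTransGen.single (PosCov.isolA_top2 v hv),
      ReflTransGen.single (PosCov.isolB_top1 v hv),
      ReflTransGen.single (PosCov.isolB_top2 v hv)⟩
  · push_neg at hv
    obtain ⟨w, hw⟩ := hv
    obtain ⟨e, he⟩ : ∃ e : ↥G.edgeSet, (e : Sym2 V) = s(v, w) :=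
      ⟨⟨s(v, w), (SimpleGraph.mem_edgeSet G).2 hw⟩, rfl⟩
    have h2 : s(v, w) = s((ε e).1, (ε e).2) := he.symm.trans (hε e)
    rcases Sym2.eq_iff.1 h2 with ⟨h1, -⟩ | ⟨h1, -⟩
    · refine ⟨?_, ?_, ?_, ?_⟩ <;> rw [h1]
      · exact (ReflTransGen.single (PosCov.ua_edge1 e)).tail (PosCov.edge1_top1 e)
      · exact (ReflTransGen.single (PosCov.ua_edge1 e)).tail (PosCov.edge1_top2 e)
      · exact (ReflTransGen.single (PosCov.ub_edge2 e)).tail (PosCov.edge2_top1 e)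
      · exact (ReflTransGen.single (PosCov.ub_edge2 e)).tail (PosCov.edge2_top2 e)
    · refine ⟨?_, ?_, ?_, ?_⟩ <;> rw [h1]
      · exact (ReflTransGen.single (PosCov.va_edge2 e)).tail (PosCov.edge2_top1 e)
      · exact (ReflTransGen.single (PosCov.va_edge2 e)).tail (PosCov.edge2_top2 e)
      · exact (ReflTransGen.single (PosCov.vb_edge1 e)).tail (PosCov.edge1_top1 e)
      · exact (ReflTransGen.single (PosCov.vb_edge1 e)).tail (PosCov.edge1_top2 e)

end Helpers

def PosSwap {V E : Type} : PosElem V E → PosElem V E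
  | .ver v => .ver v
  | .verA v => .verB v
  | .verB v => .verA v
  | .edge1 e => .edge2 e
  | .edge2 e => .edge1 e
  | .top1 => .top1
  | .top2 => .top2
  | .infA => .infB
  | .infB => .infA

lemma PosSwap_swap {V E : Type} (x : PosElem V E) : PosSwap (PosSwap x) = x := by
  cases x <;> rfl

lemma PosSwap_cov {V : Type} {H : SimpleGraph V} {ε : ↥H.edgeSet → V × V} {x y}
    (hc : PosCov H ε x y) : PosCov H ε (PosSwap x) (PosSwap y) := by
  cases hc with
  | ver_verA v => exact .ver_verB v
  | ver_verB v => exact .ver_verA v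
  | verA_infA v => exact .verB_infB v
  | verB_infB v => exact .verA_infA v
  | edge1_top1 e => exact .edge2_top1 e
  | edge1_top2 e => exact .edge2_top2 e
  | edge2_top1 e => exact .edge1_top1 e
  | edge2_top2 e => exact .edge1_top2 e
  | isolA_top1 v hv => exact .isolB_top1 v hv
  | isolA_top2 v hv => exact .isolB_top2 v hv
  | isolB_top1 v hv => exact .isolA_top1 v hv
  | isolB_top2 v hv => exact .isolA_top2 v hv
  | ua_edge1 e => exact .ub_edge2 e
  | vb_edge1 e => exact .va_edge2 e
  | ub_edge2 e => exact .ua_edge1 e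
  | va_edge2 e => exact .vb_edge1 e

lemma PosSwap_le {V : Type} {H : SimpleGraph V} {ε : ↥H.edgeSet → V × V} {x y}
    (h : PosLe H ε x y) : PosLe H ε (PosSwap x) (PosSwap y) := by
  induction h with
  | refl => exact ReflTransGen.refl
  | tail _ hcov ih => exact ih.tail (PosSwap_cov hcov)

theorem key {VG VH : Type}
    (G : SimpleGraph VG) (H : SimpleGraph VH)
    (εG : ↥G.edgeSet → VG × VG) (hεG : OrientOK G εG)
    (εH : ↥H.edgeSet → VH × VH) (hεH : OrientOK H εH)
    (h : PosElem VG ↥G.edgeSet → PosElem VH ↥H.edgeSet)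
    (hsurj : Function.Surjective h)
    (hpm : IsPMorphismRel (PosLe G εG) (PosLe H εH) h)
    (hA : h PosElem.infA = PosElem.infA) (v : VG) :
    (∃ w : VH, h (PosElem.verA v) = PosElem.verA w) ∧
      (∃ w : VH, h (PosElem.verB v) = PosElem.verB w) := by
  obtain ⟨HP, BP⟩ := hpm
  -- maximality transfer
  have maxH_of : ∀ x : PosElem VG ↥G.edgeSet,
      (∀ y, PosLe G εG x y → y = x) →
      ∀ y, PosLe H εH (h x) y → y = h x := by
    intro x hx y hy
    obtain ⟨z, hz, rfl⟩ := BP x y hy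
    rw [hx z hz]
  have hmax1 := maxH_of PosElem.top1 (fun _ => max_top1)
  have hmax2 := maxH_of PosElem.top2 (fun _ => max_top2)
  -- h top1, h top2 are not infB
  have noinfB : ∀ t : PosElem VG ↥G.edgeSet,
      PosLe G εG (.verA v) t →
      (∀ e : ↥G.edgeSet, PosLe G εG (.edge1 e) t ∧ PosLe G εG (.edge2 e) t) →
      h t ≠ PosElem.infB := by
    intro t hvt hedget hbad
    have h1 : PosLe H εH (h (.verA v)) .infA := by
      have := HP _ _ (ReflTransGen.single (PosCov.verA_infA v))
      rwa [hA] at this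
    have h2 : PosLe H εH (h (.verA v)) .infB := by
      have := HP _ _ hvt; rwa [hbad] at this
    obtain ⟨w, hw⟩ : ∃ w, h (.verA v) = PosElem.ver w := by
      rcases down_infA h1 with ⟨w, hw⟩ | ⟨w, hw⟩ | hw
      · exact ⟨w, hw⟩
      · rw [hw] at h2
        rcases down_infB h2 with ⟨u, hu⟩ | ⟨u, hu⟩ | hu <;> simp at hu
      · rw [hw] at h2
        rcases down_infB h2 with ⟨u, hu⟩ | ⟨u, hu⟩ | hu <;> simp at hu
    obtain ⟨z, hz, hzw⟩ := BP (.verA v) (.verA w)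
      (by rw [hw]; exact ReflTransGen.single (PosCov.ver_verA w))
    rcases up_verA hz with rfl | ⟨e, rfl⟩ | ⟨e, rfl⟩ | rfl | rfl | rfl
    · rw [hw] at hzw; simp at hzw
    · have hle : PosLe H εH (h (.edge1 e)) .infB := by
        have := HP _ _ (hedget e).1; rwa [hbad] at this
      rw [hzw] at hle
      rcases up_verA hle with h' | ⟨e', h'⟩ | ⟨e', h'⟩ | h' | h' | h' <;> simp at h'
    · have hle : PosLe H εH (h (.edge2 e)) .infB := by
        have := HP _ _ (hedget e).2; rwa [hbad] at this
      rw [hzw] at hle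
      rcases up_verA hle with h' | ⟨e', h'⟩ | ⟨e', h'⟩ | h' | h' | h' <;> simp at h'
    · rw [hA] at hzw; simp at hzw
    · have := hmax1 .infA (by rw [hzw]; exact ReflTransGen.single (PosCov.verA_infA w))
      rw [hzw] at this; simp at this
    · have := hmax2 .infA (by rw [hzw]; exact ReflTransGen.single (PosCov.verA_infA w))
      rw [hzw] at this; simp at this
  have hb1 : h PosElem.top1 ≠ PosElem.infB :=
    noinfB .top1 (copies_le_tops hεG v).1
      (fun e => ⟨ReflTransGen.single (PosCov.edge1_top1 e),
        ReflTransGen.single (PosCov.edge2_top1 e)⟩)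
  have hb2 : h PosElem.top2 ≠ PosElem.infB :=
    noinfB .top2 (copies_le_tops hεG v).2.1
      (fun e => ⟨ReflTransGen.single (PosCov.edge1_top2 e),
        ReflTransGen.single (PosCov.edge2_top2 e)⟩)
  -- h infB = infB
  have hB : h PosElem.infB = PosElem.infB := by
    obtain ⟨x, hx⟩ := hsurj PosElem.infB
    have hor : h PosElem.infA = PosElem.infB ∨ h PosElem.infB = PosElem.infB ∨
        h PosElem.top1 = PosElem.infB ∨ h PosElem.top2 = PosElem.infB := by
      rcases exists_above_max x with hm | hm | hm | hm
      · left; have := HP _ _ hm; rw [hx] at this; exact max_infB this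
      · right; left; have := HP _ _ hm; rw [hx] at this; exact max_infB this
      · right; right; left; have := HP _ _ hm; rw [hx] at this; exact max_infB this
      · right; right; right; have := HP _ _ hm; rw [hx] at this; exact max_infB this
    rcases hor with h' | h' | h' | h'
    · rw [hA] at h'; simp at h'
    · exact h'
    · exact absurd h' hb1
    · exact absurd h' hb2
  -- the two tops map to the two tops
  have H1 : h PosElem.top1 = PosElem.top1 ∨ h PosElem.top2 = PosElem.top1 := by
    obtain ⟨x, hx⟩ := hsurj PosElem.top1
    rcases exists_above_max x with hm | hm | hm | hm <;>
      [skip; skip; (left; have := HP _ _ hm; rw [hx] at this; exact max_top1 this);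
       (right; have := HP _ _ hm; rw [hx] at this; exact max_top1 this)]
    · have := HP _ _ hm; rw [hx, hA] at this
      exact absurd (max_top1 this) (by simp)
    · have := HP _ _ hm; rw [hx, hB] at this
      exact absurd (max_top1 this) (by simp)
  have H2 : h PosElem.top1 = PosElem.top2 ∨ h PosElem.top2 = PosElem.top2 := by
    obtain ⟨x, hx⟩ := hsurj PosElem.top2
    rcases exists_above_max x with hm | hm | hm | hm <;>
      [skip; skip; (left; have := HP _ _ hm; rw [hx] at this; exact max_top2 this);
       (right; have := HP _ _ hm; rw [hx] at this; exact max_top2 this)]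
    · have := HP _ _ hm; rw [hx, hA] at this
      exact absurd (max_top2 this) (by simp)
    · have := HP _ _ hm; rw [hx, hB] at this
      exact absurd (max_top2 this) (by simp)
  have ht1 : h PosElem.top1 = PosElem.top1 ∨ h PosElem.top1 = PosElem.top2 := by
    rcases H1 with h1 | h1
    · exact Or.inl h1
    · rcases H2 with h2 | h2
      · exact Or.inr h2
      · rw [h1] at h2; simp at h2
  have ht2 : h PosElem.top2 = PosElem.top1 ∨ h PosElem.top2 = PosElem.top2 := by
    rcases H2 with h2 | h2
    · rcases H1 with h1 | h1
      · rw [h2] at h1; simp at h1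
      · exact Or.inl h1
    · exact Or.inr h2
  -- anything below top1 does not map to infA or infB
  have hne : ∀ x : PosElem VG ↥G.edgeSet, PosLe G εG x .top1 →
      h x ≠ PosElem.infA ∧ h x ≠ PosElem.infB := by
    intro x hx
    have hle := HP _ _ hx
    constructor <;> intro hbad <;> rw [hbad] at hle
    · have := max_infA hle
      rcases ht1 with h' | h' <;> rw [h'] at this <;> simp at this
    · have := max_infB hle
      rcases ht1 with h' | h' <;> rw [h'] at this <;> simp at this
  constructor
  · -- verA part
    have h1 : PosLe H εH (h (.verA v)) .infA := by
      have := HP _ _ (ReflTransGen.single (PosCov.verA_infA v))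
      rwa [hA] at this
    rcases down_infA h1 with ⟨w, hw⟩ | ⟨w, hw⟩ | hw
    · exfalso
      obtain ⟨z, hz, hzw⟩ := BP (.verA v) (.verB w)
        (by rw [hw]; exact ReflTransGen.single (PosCov.ver_verB w))
      rcases up_verA hz with rfl | ⟨e, rfl⟩ | ⟨e, rfl⟩ | rfl | rfl | rfl
      · rw [hw] at hzw; simp at hzw
      · obtain ⟨z', hz', hz'w⟩ := BP (.edge1 e) .infB
          (by rw [hzw]; exact ReflTransGen.single (PosCov.verB_infB w))
        rcases up_edge (Or.inl ⟨e, rfl⟩) hz' with ⟨e', rfl⟩ | ⟨e', rfl⟩ | rfl | rfl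
        · exact (hne _ (ReflTransGen.single (PosCov.edge1_top1 e'))).2 hz'w
        · exact (hne _ (ReflTransGen.single (PosCov.edge2_top1 e'))).2 hz'w
        · rcases ht1 with h' | h' <;> rw [h'] at hz'w <;> simp at hz'w
        · rcases ht2 with h' | h' <;> rw [h'] at hz'w <;> simp at hz'w
      · obtain ⟨z', hz', hz'w⟩ := BP (.edge2 e) .infB
          (by rw [hzw]; exact ReflTransGen.single (PosCov.verB_infB w))
        rcases up_edge (Or.inr ⟨e, rfl⟩) hz' with ⟨e', rfl⟩ | ⟨e', rfl⟩ | rfl | rfl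
        · exact (hne _ (ReflTransGen.single (PosCov.edge1_top1 e'))).2 hz'w
        · exact (hne _ (ReflTransGen.single (PosCov.edge2_top1 e'))).2 hz'w
        · rcases ht1 with h' | h' <;> rw [h'] at hz'w <;> simp at hz'w
        · rcases ht2 with h' | h' <;> rw [h'] at hz'w <;> simp at hz'w
      · rw [hA] at hzw; simp at hzw
      · rcases ht1 with h' | h' <;> rw [h'] at hzw <;> simp at hzw
      · rcases ht2 with h' | h' <;> rw [h'] at hzw <;> simp at hzw
    · exact ⟨w, hw⟩
    · exact absurd hw (hne _ (copies_le_tops hεG v).1).1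
  · -- verB part
    have h1 : PosLe H εH (h (.verB v)) .infB := by
      have := HP _ _ (ReflTransGen.single (PosCov.verB_infB v))
      rwa [hB] at this
    rcases down_infB h1 with ⟨w, hw⟩ | ⟨w, hw⟩ | hw
    · exfalso
      obtain ⟨z, hz, hzw⟩ := BP (.verB v) (.verA w)
        (by rw [hw]; exact ReflTransGen.single (PosCov.ver_verA w))
      rcases up_verB hz with rfl | ⟨e, rfl⟩ | ⟨e, rfl⟩ | rfl | rfl | rfl
      · rw [hw] at hzw; simp at hzw
      · obtain ⟨z', hz', hz'w⟩ := BP (.edge1 e) .infA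
          (by rw [hzw]; exact ReflTransGen.single (PosCov.verA_infA w))
        rcases up_edge (Or.inl ⟨e, rfl⟩) hz' with ⟨e', rfl⟩ | ⟨e', rfl⟩ | rfl | rfl
        · exact (hne _ (ReflTransGen.single (PosCov.edge1_top1 e'))).1 hz'w
        · exact (hne _ (ReflTransGen.single (PosCov.edge2_top1 e'))).1 hz'w
        · rcases ht1 with h' | h' <;> rw [h'] at hz'w <;> simp at hz'w
        · rcases ht2 with h' | h' <;> rw [h'] at hz'w <;> simp at hz'w
      · obtain ⟨z', hz', hz'w⟩ := BP (.edge2 e) .infA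
          (by rw [hzw]; exact ReflTransGen.single (PosCov.verA_infA w))
        rcases up_edge (Or.inr ⟨e, rfl⟩) hz' with ⟨e', rfl⟩ | ⟨e', rfl⟩ | rfl | rfl
        · exact (hne _ (ReflTransGen.single (PosCov.edge1_top1 e'))).1 hz'w
        · exact (hne _ (ReflTransGen.single (PosCov.edge2_top1 e'))).1 hz'w
        · rcases ht1 with h' | h' <;> rw [h'] at hz'w <;> simp at hz'w
        · rcases ht2 with h' | h' <;> rw [h'] at hz'w <;> simp at hz'w
      · rw [hB] at hzw; simp at hzw
      · rcases ht1 with h' | h' <;> rw [h'] at hzw <;> simp at hzw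
      · rcases ht2 with h' | h' <;> rw [h'] at hzw <;> simp at hzw
    · exact ⟨w, hw⟩
    · exact absurd hw (hne _ (copies_le_tops hεG v).2.2.1).2

theorem vertexCopies_map_into_vertexCopies {VG VH : Type} [Fintype VG] [Fintype VH] [Nonempty VH]
    (G : SimpleGraph VG) (H : SimpleGraph VH)
    (εG : ↥G.edgeSet → VG × VG) (hεG : OrientOK G εG)
    (εH : ↥H.edgeSet → VH × VH) (hεH : OrientOK H εH)
    (h : PosElem VG ↥G.edgeSet → PosElem VH ↥H.edgeSet)
    (hsurj : Function.Surjective h)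
    (hpm : IsPMorphismRel (PosLe G εG) (PosLe H εH) h) :
    (h PosElem.infA = PosElem.infA →
      (∀ v : VG, ∃ w : VH, h (PosElem.verA v) = PosElem.verA w) ∧
      (∀ v : VG, ∃ w : VH, h (PosElem.verB v) = PosElem.verB w)) ∧
    (h PosElem.infA = PosElem.infB →
      (∀ v : VG, ∃ w : VH, h (PosElem.verA v) = PosElem.verB w) ∧
      (∀ v : VG, ∃ w : VH, h (PosElem.verB v) = PosElem.verA w)) := by
  constructor
  · intro hA
    exact ⟨fun v => (key G H εG hεG εH hεH h hsurj hpm hA v).1,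
      fun v => (key G H εG hεG εH hεH h hsurj hpm hA v).2⟩
  · intro hB
    -- compose with the A/B swap automorphism of Pos(H)
    have hsurj' : Function.Surjective (fun x => PosSwap (h x) :
        PosElem VG ↥G.edgeSet → PosElem VH ↥H.edgeSet) := by
      intro y
      obtain ⟨x, hx⟩ := hsurj (PosSwap y)
      exact ⟨x, by show PosSwap (h x) = y; rw [hx, PosSwap_swap]⟩
    have hpm' : IsPMorphismRel (PosLe G εG) (PosLe H εH) (fun x => PosSwap (h x)) := by
      constructor
      · intro x y hxy
        exact PosSwap_le (hpm.1 x y hxy)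
      · intro x y hy
        have hy2 : PosLe H εH (h x) (PosSwap y) := by
          have h3 := PosSwap_le hy
          rwa [show PosSwap ((fun x => PosSwap (h x)) x) = h x from PosSwap_swap _] at h3
        obtain ⟨z, hz, hz2⟩ := hpm.2 x (PosSwap y) hy2
        exact ⟨z, hz, by show PosSwap (h z) = y; rw [hz2, PosSwap_swap]⟩
    have hA' : (fun x => PosSwap (h x)) PosElem.infA = PosElem.infA := by
      show PosSwap (h PosElem.infA) = PosElem.infA
      rw [hB]
      rfl
    constructor
    · intro v
      obtain ⟨w, hw⟩ := (key G H εG hεG εH hεH _ hsurj' hpm' hA' v).1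
      refine ⟨w, ?_⟩
      have h2 := congrArg PosSwap hw
      rw [show PosSwap ((fun x => PosSwap (h x)) (PosElem.verA v)) = h (PosElem.verA v)
        from PosSwap_swap _] at h2
      exact h2
    · intro v
      obtain ⟨w, hw⟩ := (key G H εG hεG εH hεH _ hsurj' hpm' hA' v).2
      refine ⟨w, ?_⟩
      have h2 := congrArg PosSwap hw
      rw [show PosSwap ((fun x => PosSwap (h x)) (PosElem.verB v)) = h (PosElem.verB v)
        from PosSwap_swap _] at h2
      exact h2
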